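/- arXiv:2604.08732 — 2 statements merged into one kernel-verified Lean document; each statement's English description precedes it below -/
import Mathlib

section
/- Let 1 < p < ∞ and (x_i) ∈ ℓ^p(X) with ‖(x_i)‖_p = 1. Then the state space S_{(x_i)} ⊆ ℓ^q(X*) is weakly compact if and only if for each i ∈ ℕ with x_i ≠ 0, the state space S_{x_i/‖x_i‖} ⊆ X* is weakly compact. -/
open NormedSpace

/-- The topology on `A` induced by a pairing `A → (B → ℝ)`. -/
def pairingTop {A B : Type*} (f : A → B → ℝ) : TopologicalSpace A :=
  TopologicalSpace.induced f Pi.topologicalSpace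

/-- The weak topology on `ℓ^q(X*)`. -/
noncomputable def wTop {X : Type*} [NormedAddCommGroup X] [NormedSpace ℝ X]
    (q : ENNReal) [Fact (1 ≤ q)] :
    TopologicalSpace (lp (fun _ : ℕ => StrongDual ℝ X) q) :=
  pairingTop fun φ (Λ : StrongDual ℝ (lp (fun _ : ℕ => StrongDual ℝ X) q)) => Λ φ

/-- The weak topology on `X*`. -/
noncomputable def wTopDual (X : Type*) [NormedAddCommGroup X] [NormedSpace ℝ X] :
    TopologicalSpace (StrongDual ℝ X) :=
  pairingTop fun (g : StrongDual ℝ X)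
    (Λ : StrongDual ℝ (StrongDual ℝ X)) => Λ g

/-! ### Auxiliary analytic lemmas -/

/-- Strict two-point AM-GM. -/
lemma strict_amgm {A B w₁ w₂ : ℝ} (hA : 0 < A) (hB : 0 < B) (hAB : A ≠ B)
    (hw₁ : 0 < w₁) (hw₂ : 0 < w₂) (hw : w₁ + w₂ = 1) :
    A ^ w₁ * B ^ w₂ < w₁ * A + w₂ * B := by
  have h := strictConcaveOn_log_Ioi.2 (Set.mem_Ioi.2 hA) (Set.mem_Ioi.2 hB) hAB hw₁ hw₂ hw
  have hmix : 0 < w₁ * A + w₂ * B := by positivity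
  have h2 : w₁ * Real.log A + w₂ * Real.log B < Real.log (w₁ * A + w₂ * B) := by
    simpa [smul_eq_mul] using h
  have h3 : Real.log (A ^ w₁ * B ^ w₂) < Real.log (w₁ * A + w₂ * B) := by
    rwa [Real.log_mul (by positivity) (by positivity), Real.log_rpow hA, Real.log_rpow hB]
  calc A ^ w₁ * B ^ w₂ = Real.exp (Real.log (A ^ w₁ * B ^ w₂)) :=
        (Real.exp_log (by positivity)).symm
    _ < Real.exp (Real.log (w₁ * A + w₂ * B)) := Real.exp_lt_exp.2 h3
    _ = w₁ * A + w₂ * B := Real.exp_log hmix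

/-- Equality case in Young's inequality. -/
lemma young_eq {a b pr qr : ℝ} (ha : 0 ≤ a) (hb : 0 ≤ b) (hpq : pr.HolderConjugate qr)
    (h : a * b = a ^ pr / pr + b ^ qr / qr) : a ^ pr = b ^ qr := by
  have hp0 : (0:ℝ) < pr := hpq.pos
  have hq0 : (0:ℝ) < qr := hpq.symm.pos
  rcases eq_or_lt_of_le ha with ha0 | ha0
  · rw [← ha0, zero_mul, Real.zero_rpow hpq.ne_zero, zero_div, zero_add] at h
    rw [← ha0, Real.zero_rpow hpq.ne_zero]
    have : b ^ qr = 0 := by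
      field_simp at h
      linarith
    exact this.symm
  rcases eq_or_lt_of_le hb with hb0 | hb0
  · rw [← hb0, mul_zero, Real.zero_rpow hpq.symm.ne_zero, zero_div, add_zero] at h
    rw [← hb0, Real.zero_rpow hpq.symm.ne_zero]
    field_simp at h
    linarith
  by_contra hne
  have hA : 0 < a ^ pr := Real.rpow_pos_of_pos ha0 _
  have hB : 0 < b ^ qr := Real.rpow_pos_of_pos hb0 _
  have hw : 1 / pr + 1 / qr = 1 := by simpa [one_div] using hpq.inv_add_inv_eq_one
  have hs := strict_amgm hA hB hne (by positivity) (by positivity) hw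
  have hl : (a ^ pr) ^ (1 / pr) * (b ^ qr) ^ (1 / qr) = a * b := by
    rw [← Real.rpow_mul ha, ← Real.rpow_mul hb, mul_one_div, div_self hp0.ne',
      mul_one_div, div_self hq0.ne', Real.rpow_one, Real.rpow_one]
  rw [hl, h] at hs
  simp only [one_div, inv_mul_eq_div] at hs
  exact lt_irrefl _ hs

lemma tsum_termwise_eq {f g : ℕ → ℝ} (hfg : ∀ i, f i ≤ g i) (hf : Summable f) (hg : Summable g)
    (h : ∑' i, f i = ∑' i, g i) (i : ℕ) : f i = g i := by
  by_contra hne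
  exact (Summable.tsum_lt_tsum hfg (lt_of_le_of_ne (hfg i) hne) hf hg).ne h

/-- Equality case in Hölder's inequality for sums. -/
lemma holder_eq {pr qr : ℝ} (hpq : pr.HolderConjugate qr) {a b c : ℕ → ℝ}
    (ha : ∀ i, 0 ≤ a i) (hb : ∀ i, 0 ≤ b i) (hc : ∀ i, c i ≤ a i * b i)
    (hsa : Summable (fun i => a i ^ pr)) (hsb : Summable (fun i => b i ^ qr))
    (hsc : Summable c)
    (hta : ∑' i, a i ^ pr = 1) (htb : ∑' i, b i ^ qr = 1) (htc : ∑' i, c i = 1) :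
    ∀ i, c i = a i * b i ∧ b i = a i ^ (pr - 1) := by
  have hY : ∀ i, a i * b i ≤ a i ^ pr / pr + b i ^ qr / qr := fun i =>
    Real.young_inequality_of_nonneg (ha i) (hb i) hpq
  have hsY : Summable (fun i => a i ^ pr / pr + b i ^ qr / qr) :=
    (hsa.div_const pr).add (hsb.div_const qr)
  have htY : ∑' i, (a i ^ pr / pr + b i ^ qr / qr) = 1 := by
    rw [Summable.tsum_add (hsa.div_const pr) (hsb.div_const qr), tsum_div_const, tsum_div_const, hta, htb]
    simpa [one_div] using hpq.inv_add_inv_eq_one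
  have heq : ∀ i, c i = a i ^ pr / pr + b i ^ qr / qr :=
    fun i => tsum_termwise_eq (fun j => (hc j).trans (hY j)) hsc hsY (htc.trans htY.symm) i
  intro i
  have h1 : c i = a i * b i := le_antisymm (hc i) ((hY i).trans (heq i).ge)
  have hab : a i * b i = a i ^ pr / pr + b i ^ qr / qr := by rw [← h1, heq i]
  have h2 : a i ^ pr = b i ^ qr := young_eq (ha i) (hb i) hpq hab
  refine ⟨h1, ?_⟩
  have hq0 : qr ≠ 0 := hpq.symm.ne_zero
  have hqpr : pr * (1 / qr) = pr - 1 := by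
    have h := hpq.inv_add_inv_eq_one
    have hp0 : pr ≠ 0 := hpq.ne_zero
    field_simp at h ⊢
    nlinarith [h]
  calc b i = (b i ^ qr) ^ (1 / qr) := by
        rw [← Real.rpow_mul (hb i), mul_one_div, div_self hq0, Real.rpow_one]
    _ = (a i ^ pr) ^ (1 / qr) := by rw [h2]
    _ = a i ^ (pr - 1) := by rw [← Real.rpow_mul (ha i), hqpr]

/-! ### Topological helper lemmas -/

lemma pairing_eval_cont {A B : Type*} (f : A → B → ℝ) (b : B) :
    @Continuous A ℝ (pairingTop f) _ (fun a => f a b) := by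
  letI : TopologicalSpace A := pairingTop f
  exact (continuous_apply b).comp continuous_induced_dom

/-- Continuity into a `pairingTop` topology. -/
lemma pairing_cont_rng {A B C : Type*} (τ : TopologicalSpace C) (f : A → B → ℝ) (g : C → A)
    (h : ∀ b : B, @Continuous C ℝ τ _ (fun c => f (g c) b)) :
    @Continuous C A τ (pairingTop f) g :=
  continuous_induced_rng.2 (continuous_pi h)

section Helpers

variable {X : Type*} [NormedAddCommGroup X] [NormedSpace ℝ X]

lemma wTop_cont_clm (q : ENNReal) [Fact (1 ≤ q)]
    (T : lp (fun _ : ℕ => StrongDual ℝ X) q →L[ℝ] StrongDual ℝ X) :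
    @Continuous _ _ (wTop q) (wTopDual X) T := by
  refine pairing_cont_rng _ _ _ fun Λ => ?_
  exact pairing_eval_cont
    (fun φ (Λ' : StrongDual ℝ (lp (fun _ : ℕ => StrongDual ℝ X) q)) => Λ' φ) (Λ.comp T)

lemma wTopDual_cont_clm (T : StrongDual ℝ X →L[ℝ] StrongDual ℝ X) :
    @Continuous _ _ (wTopDual X) (wTopDual X) T := by
  refine pairing_cont_rng _ _ _ fun Λ => ?_
  exact pairing_eval_cont
    (fun (g : StrongDual ℝ X) (Λ' : StrongDual ℝ (StrongDual ℝ X)) => Λ' g) (Λ.comp T)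

variable (q : ENNReal) [Fact (1 ≤ q)]

lemma q_ne_zero : q ≠ 0 := (lt_of_lt_of_le zero_lt_one (Fact.out : 1 ≤ q)).ne'

/-- Coordinate projection as a continuous linear map. -/
noncomputable def projCLM (i : ℕ) : lp (fun _ : ℕ => StrongDual ℝ X) q →L[ℝ] StrongDual ℝ X :=
  LinearMap.mkContinuous
    { toFun := fun ψ => ψ i
      map_add' := fun f g => congrFun (lp.coeFn_add f g) i
      map_smul' := fun c f => congrFun (lp.coeFn_smul c f) i }
    1 (fun ψ => by
      simpa using lp.norm_apply_le_norm (q_ne_zero q) ψ i)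

@[simp] lemma projCLM_apply (i : ℕ) (ψ : lp (fun _ : ℕ => StrongDual ℝ X) q) :
    projCLM q i ψ = ψ i := rfl

lemma lp_single_add (i : ℕ) (a b : StrongDual ℝ X) :
    lp.single (E := fun _ : ℕ => StrongDual ℝ X) q i (a + b) =
      lp.single (E := fun _ : ℕ => StrongDual ℝ X) q i a +
        lp.single (E := fun _ : ℕ => StrongDual ℝ X) q i b := by
  apply lp.ext
  funext j
  rw [lp.coeFn_add, Pi.add_apply]
  rcases eq_or_ne j i with rfl | hj
  · simp [lp.single_apply_self]
  · simp [lp.single_apply_ne _ _ _ hj]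

/-- Coordinate inclusion as a continuous linear map. -/
noncomputable def singleCLM (hq : 0 < q.toReal) (i : ℕ) :
    StrongDual ℝ X →L[ℝ] lp (fun _ : ℕ => StrongDual ℝ X) q :=
  LinearMap.mkContinuous
    { toFun := fun g => lp.single (E := fun _ : ℕ => StrongDual ℝ X) q i g
      map_add' := fun a b => lp_single_add q i a b
      map_smul' := fun c a => by simpa using lp.single_smul q i a c }
    1 (fun g => by
      rw [one_mul]
      exact le_of_eq (lp.norm_single (E := fun _ : ℕ => StrongDual ℝ X) (ENNReal.toReal_pos_iff.mp hq).1 i g))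

@[simp] lemma singleCLM_apply (hq : 0 < q.toReal) (i : ℕ) (g : StrongDual ℝ X) :
    singleCLM q hq i g = lp.single (E := fun _ : ℕ => StrongDual ℝ X) q i g := rfl

end Helpers

set_option maxHeartbeats 1600000 in
/-- Let `(x_i) ∈ ℓ^p(X)` be a unit vector.  The state space
`S_{(x_i)} = {(x_i*) ∈ ℓ^q(X*) : ‖(x_i*)‖_q = 1, ∑ x_i*(x_i) = 1}` is weakly compact
iff for each `i` with `x_i ≠ 0` the state space `S_{x_i/‖x_i‖} ⊆ X*` is weakly compact. -/
theorem stmt8 {X : Type*} [NormedAddCommGroup X] [NormedSpace ℝ X] [CompleteSpace X]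
    (p q : ENNReal) [Fact (1 ≤ p)] [Fact (1 ≤ q)]
    (hp : 1 < p) (hp' : p ≠ ⊤) (hpq : 1 / p + 1 / q = 1)
    (xs : lp (fun _ : ℕ => X) p) (hxs : ‖xs‖ = 1) :
    @IsCompact _ (wTop q) {ψ : lp (fun _ : ℕ => StrongDual ℝ X) q |
        ‖ψ‖ = 1 ∧ ∑' i, ψ i (xs i) = 1} ↔
      ∀ i, xs i ≠ 0 → @IsCompact _ (wTopDual X)
        {g : StrongDual ℝ X | ‖g‖ = 1 ∧ g (‖xs i‖⁻¹ • xs i) = 1} := by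
  classical
  -- exponent bookkeeping
  have hp0 : p ≠ 0 := (zero_lt_one.trans hp).ne'
  haveI hconjE : ENNReal.HolderConjugate p q := ⟨by simpa [one_div] using hpq⟩
  have hq0 : q ≠ 0 := ENNReal.HolderConjugate.ne_zero q p
  have hsub0 : p - 1 ≠ 0 := (tsub_pos_of_lt hp).ne'
  have hsub_top : p - 1 ≠ ⊤ := ENNReal.sub_ne_top hp'
  have hq_top : q ≠ ⊤ := by
    rw [ENNReal.HolderConjugate.conj_eq (p := p) (q := q)]
    exact ENNReal.add_ne_top.2 ⟨ENNReal.one_ne_top, ENNReal.inv_ne_top.2 hsub0⟩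
  have hq1 : 1 < q := by
    rw [ENNReal.HolderConjugate.conj_eq (p := p) (q := q)]
    exact ENNReal.lt_add_right ENNReal.one_ne_top (ENNReal.inv_ne_zero.2 hsub_top)
  set pr := p.toReal with hpr_def
  set qr := q.toReal with hqr_def
  have hpr1 : 1 < pr := by
    rw [show (1:ℝ) = (1:ENNReal).toReal by simp]
    exact (ENNReal.toReal_lt_toReal ENNReal.one_ne_top hp').2 hp
  have hqr1 : 1 < qr := by
    rw [show (1:ℝ) = (1:ENNReal).toReal by simp]
    exact (ENNReal.toReal_lt_toReal ENNReal.one_ne_top hq_top).2 hq1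
  have hpr0 : 0 < pr := zero_lt_one.trans hpr1
  have hqr0 : 0 < qr := zero_lt_one.trans hqr1
  have hprq : pr.HolderConjugate qr := by
    refine Real.holderConjugate_iff.2 ⟨hpr1, ?_⟩
    have h := congrArg ENNReal.toReal (ENNReal.HolderConjugate.inv_add_inv_eq_one p q)
    rwa [ENNReal.toReal_add (ENNReal.inv_ne_top.mpr hp0) (ENNReal.inv_ne_top.mpr hq0),
      ENNReal.toReal_inv, ENNReal.toReal_inv, ENNReal.toReal_one] at h
  have hqpr : (pr - 1) * qr = pr := hprq.sub_one_mul_conj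
  have hpr1' : pr - 1 ≠ 0 := hprq.sub_one_ne_zero
  -- the coefficients
  set a : ℕ → ℝ := fun i => ‖xs i‖ with ha_def
  have ha : ∀ i, 0 ≤ a i := fun i => norm_nonneg _
  have hsa : HasSum (fun i => a i ^ pr) 1 := by
    have := lp.hasSum_norm (by rw [← hpr_def]; exact hpr0) xs
    rwa [hxs, Real.one_rpow] at this
  -- the coordinate state spaces
  set C : ℕ → Set (StrongDual ℝ X) :=
    fun i => {h | ‖h‖ = a i ^ (pr - 1) ∧ h (xs i) = a i ^ pr} with hC_def
  have hCnorm : ∀ (f : ℕ → StrongDual ℝ X), (∀ j, f j ∈ C j) → ∀ j, ‖f j‖ ^ qr = a j ^ pr := by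
    intro f hf j
    rw [(hf j).1, ← Real.rpow_mul (ha j), hqpr]
  -- membership in ℓ^q
  have hmem : ∀ (f : ℕ → StrongDual ℝ X), (∀ j, f j ∈ C j) → Memℓp f q := by
    intro f hf
    apply memℓp_gen
    rw [show (fun j => ‖f j‖ ^ q.toReal) = fun j => a j ^ pr from funext (hCnorm f hf)]
    exact hsa.summable
  -- elements with coordinates in `C` are states
  have hB : ∀ (ψ : lp (fun _ : ℕ => StrongDual ℝ X) q), (∀ j, ψ j ∈ C j) →
      ‖ψ‖ = 1 ∧ ∑' i, ψ i (xs i) = 1 := by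
    intro ψ hψ
    have hnorm : ‖ψ‖ ^ qr = 1 := by
      rw [lp.norm_rpow_eq_tsum (by rw [← hqr_def]; exact hqr0) ψ]
      rw [show (fun j => ‖ψ j‖ ^ q.toReal) = fun j => a j ^ pr from
        funext (hCnorm (fun j => ψ j) hψ)]
      exact hsa.tsum_eq
    constructor
    · have h1 : ‖ψ‖ = (‖ψ‖ ^ qr) ^ (1 / qr) := by
        rw [← Real.rpow_mul (norm_nonneg _), mul_one_div, div_self hqr0.ne', Real.rpow_one]
      rw [h1, hnorm, Real.one_rpow]
    · rw [show (fun i => ψ i (xs i)) = fun i => a i ^ pr from funext fun i => (hψ i).2]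
      exact hsa.tsum_eq
  -- states have coordinates in `C`
  have hCmem : ∀ (ψ : lp (fun _ : ℕ => StrongDual ℝ X) q),
      ‖ψ‖ = 1 → (∑' i, ψ i (xs i)) = 1 → ∀ j, ψ j ∈ C j := by
    intro ψ hψ1 hψ2 j
    have hsb : HasSum (fun i => ‖ψ i‖ ^ qr) 1 := by
      have := lp.hasSum_norm (by rw [← hqr_def]; exact hqr0) ψ
      rwa [hψ1, Real.one_rpow] at this
    have hsc : Summable (fun i => ψ i (xs i)) := by
      by_contra hcon
      rw [tsum_eq_zero_of_not_summable hcon] at hψ2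
      exact zero_ne_one hψ2
    have key := holder_eq hprq (a := a) (b := fun i => ‖ψ i‖) (c := fun i => ψ i (xs i))
      ha (fun i => norm_nonneg _)
      (fun i => by
        calc ψ i (xs i) ≤ |(ψ i) (xs i)| := le_abs_self _
          _ = ‖(ψ i) (xs i)‖ := (Real.norm_eq_abs _).symm
          _ ≤ ‖ψ i‖ * ‖xs i‖ := (ψ i).le_opNorm (xs i)
          _ = a i * ‖ψ i‖ := mul_comm _ _)
      hsa.summable hsb.summable hsc hsa.tsum_eq hsb.tsum_eq hψ2
    obtain ⟨h1, h2⟩ := key j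
    replace h1 : ψ j (xs j) = a j * ‖ψ j‖ := h1
    replace h2 : ‖ψ j‖ = a j ^ (pr - 1) := h2
    constructor
    · exact h2
    · rw [h1, h2]
      rcases eq_or_lt_of_le (ha j) with h0 | h0
      · rw [← h0, Real.zero_rpow hpr1', mul_zero, Real.zero_rpow hpr0.ne']
      · rw [mul_comm, ← Real.rpow_add_one h0.ne' (pr - 1), sub_add_cancel]
  constructor
  · -- forward direction
    intro hS i hxi
    have hai : 0 < a i := norm_pos_iff.mpr hxi
    set c : ℝ := a i ^ (1 - pr) with hc_def
    have hc_pos : 0 < c := Real.rpow_pos_of_pos hai _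
    set T : lp (fun _ : ℕ => StrongDual ℝ X) q →L[ℝ] StrongDual ℝ X := c • projCLM q i with hT_def
    have hTcont : @Continuous _ _ (wTop q) (wTopDual X) T := wTop_cont_clm q T
    have himg : (fun ψ => T ψ) '' {ψ : lp (fun _ : ℕ => StrongDual ℝ X) q |
        ‖ψ‖ = 1 ∧ ∑' j, ψ j (xs j) = 1} =
        {g : StrongDual ℝ X | ‖g‖ = 1 ∧ g (‖xs i‖⁻¹ • xs i) = 1} := by
      ext g
      constructor
      · rintro ⟨ψ, hψ, rfl⟩
        obtain ⟨h1, h2⟩ := hCmem ψ hψ.1 hψ.2 i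
        have hTψ : T ψ = c • ψ i := rfl
        constructor
        · show ‖T ψ‖ = 1
          rw [hTψ, norm_smul, Real.norm_eq_abs, abs_of_pos hc_pos, h1, hc_def,
            ← Real.rpow_add hai]
          norm_num
        · show (T ψ) (‖xs i‖⁻¹ • xs i) = 1
          rw [hTψ]
          have : (c • ψ i) (‖xs i‖⁻¹ • xs i) = c * (‖xs i‖⁻¹ * ψ i (xs i)) := by
            simp [smul_eq_mul]; ring
          rw [this, h2, hc_def]
          rw [show (‖xs i‖ : ℝ)⁻¹ = a i ^ (-1 : ℝ) by
            rw [Real.rpow_neg_one]]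
          rw [← Real.rpow_add hai, ← Real.rpow_add hai]
          norm_num
      · intro hg
        obtain ⟨hg1, hg2⟩ := hg
        have hgx : g (xs i) = a i := by
          have : g (‖xs i‖⁻¹ • xs i) = ‖xs i‖⁻¹ * g (xs i) := by simp [smul_eq_mul]
          rw [this] at hg2
          field_simp at hg2
          linarith [hg2]
        set f : ℕ → StrongDual ℝ X := fun j =>
          if j = i then a i ^ (pr - 1) • g
          else if hj : xs j = 0 then 0
          else a j ^ (pr - 1) • (exists_dual_vector ℝ (xs j) (norm_ne_zero_iff.mpr hj)).choose with hf_def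
        have hf : ∀ j, f j ∈ C j := by
          intro j
          rcases eq_or_ne j i with rfl | hj
          · have hfj : f j = a j ^ (pr - 1) • g := by simp [hf_def]
            constructor
            · show ‖f j‖ = a j ^ (pr - 1)
              rw [hfj, norm_smul, Real.norm_eq_abs,
                abs_of_nonneg (Real.rpow_nonneg (ha j) _), hg1, mul_one]
            · show (f j) (xs j) = a j ^ pr
              rw [hfj]
              have heval : (a j ^ (pr - 1) • g) (xs j) = a j ^ (pr - 1) * g (xs j) := by
                simp [smul_eq_mul]
              rw [heval, hgx, ← Real.rpow_add_one hai.ne' (pr - 1), sub_add_cancel]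
          · by_cases hxj : xs j = 0
            · have haj : a j = 0 := by rw [ha_def]; simp [hxj]
              have hfj : f j = 0 := by simp [hf_def, hj, hxj]
              constructor
              · show ‖f j‖ = a j ^ (pr - 1)
                rw [hfj, haj, norm_zero, Real.zero_rpow hpr1']
              · show (f j) (xs j) = a j ^ pr
                rw [hfj, haj, Real.zero_rpow hpr0.ne']
                simp
            · have haj : 0 < a j := norm_pos_iff.mpr hxj
              obtain ⟨hn, he⟩ := (exists_dual_vector ℝ (xs j) (norm_ne_zero_iff.mpr hxj)).choose_spec
              have hfj : f j = a j ^ (pr - 1) • (exists_dual_vector ℝ (xs j) (norm_ne_zero_iff.mpr hxj)).choose := by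
                simp [hf_def, hj, hxj]
              constructor
              · show ‖f j‖ = a j ^ (pr - 1)
                rw [hfj, norm_smul, Real.norm_eq_abs,
                  abs_of_nonneg (Real.rpow_nonneg (ha j) _), hn, mul_one]
              · show (f j) (xs j) = a j ^ pr
                rw [hfj]
                have heval : (a j ^ (pr - 1) • (exists_dual_vector ℝ (xs j) (norm_ne_zero_iff.mpr hxj)).choose) (xs j) =
                    a j ^ (pr - 1) * (exists_dual_vector ℝ (xs j) (norm_ne_zero_iff.mpr hxj)).choose (xs j) := by
                  simp [smul_eq_mul]
                rw [heval, he]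
                show a j ^ (pr - 1) * a j = a j ^ pr
                rw [← Real.rpow_add_one haj.ne' (pr - 1), sub_add_cancel]
        refine ⟨⟨f, hmem f hf⟩, ?_, ?_⟩
        · exact hB ⟨f, hmem f hf⟩ (fun j => hf j)
        · show c • (⟨f, hmem f hf⟩ : lp (fun _ : ℕ => StrongDual ℝ X) q) i = g
          show c • f i = g
          have hfi : f i = a i ^ (pr - 1) • g := by simp [hf_def]
          rw [hfi, smul_smul, hc_def, ← Real.rpow_add hai]
          norm_num
    rw [← himg]
    exact @IsCompact.image _ _ (wTop q) (wTopDual X) _ _ hS hTcont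
  · -- backward direction
    intro hK
    have hCcomp : ∀ i, @IsCompact _ (wTopDual X) (C i) := by
      intro i
      by_cases hxi : xs i = 0
      · have hai : a i = 0 := by rw [ha_def]; simp [hxi]
        have : C i = {0} := by
          ext h
          simp only [hC_def, Set.mem_setOf_eq, Set.mem_singleton_iff, hai,
            Real.zero_rpow hpr1', Real.zero_rpow hpr0.ne', hxi, map_zero]
          constructor
          · rintro ⟨h1, -⟩
            exact norm_eq_zero.1 h1
          · rintro rfl
            simp
        rw [this]
        exact @isCompact_singleton _ (wTopDual X) _
      · have hai : 0 < a i := norm_pos_iff.mpr hxi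
        have h1 : C i = (fun g : StrongDual ℝ X => (a i ^ (pr - 1) : ℝ) • g) ''
            {g : StrongDual ℝ X | ‖g‖ = 1 ∧ g (‖xs i‖⁻¹ • xs i) = 1} := by
          ext h
          constructor
          · intro hh
            obtain ⟨hh1, hh2⟩ := hh
            refine ⟨(a i ^ (1 - pr) : ℝ) • h, ⟨?_, ?_⟩, ?_⟩
            · rw [norm_smul, Real.norm_eq_abs,
                abs_of_nonneg (Real.rpow_nonneg (ha i) _), hh1, ← Real.rpow_add hai]
              norm_num
            · have : ((a i ^ (1 - pr) : ℝ) • h) (‖xs i‖⁻¹ • xs i) =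
                  a i ^ (1 - pr) * (‖xs i‖⁻¹ * h (xs i)) := by simp [smul_eq_mul]; ring
              rw [this, hh2]
              rw [show (‖xs i‖ : ℝ)⁻¹ = a i ^ (-1 : ℝ) by rw [Real.rpow_neg_one]]
              rw [← Real.rpow_add hai, ← Real.rpow_add hai]
              norm_num
            · show (a i ^ (pr - 1) : ℝ) • (a i ^ (1 - pr) : ℝ) • h = h
              rw [smul_smul, ← Real.rpow_add hai]
              norm_num
          · rintro ⟨g, ⟨hg1, hg2⟩, rfl⟩
            have hgx : g (xs i) = a i := by
              have : g (‖xs i‖⁻¹ • xs i) = ‖xs i‖⁻¹ * g (xs i) := by simp [smul_eq_mul]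
              rw [this] at hg2
              field_simp at hg2
              linarith [hg2]
            constructor
            · rw [norm_smul, Real.norm_eq_abs,
                abs_of_nonneg (Real.rpow_nonneg (ha i) _), hg1, mul_one]
            · show a i ^ (pr - 1) * g (xs i) = a i ^ pr
              rw [hgx, ← Real.rpow_add_one hai.ne' (pr - 1), sub_add_cancel]
        rw [h1]
        have hcont : @Continuous _ _ (wTopDual X) (wTopDual X)
            (fun g : StrongDual ℝ X => (a i ^ (pr - 1) : ℝ) • g) :=
          wTopDual_cont_clm ((a i ^ (pr - 1) : ℝ) • ContinuousLinearMap.id ℝ (StrongDual ℝ X))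
        exact @IsCompact.image _ _ (wTopDual X) (wTopDual X) _ _ (hK i hxi) hcont
    have hsingle_cont : ∀ (Λ : StrongDual ℝ (lp (fun _ : ℕ => StrongDual ℝ X) q)) (j : ℕ),
        @Continuous _ _ (wTopDual X) _
          (fun g : StrongDual ℝ X => Λ (lp.single (E := fun _ : ℕ => StrongDual ℝ X) q j g)) := by
      intro Λ j
      exact pairing_eval_cont
        (fun (g : StrongDual ℝ X) (Λ' : StrongDual ℝ (StrongDual ℝ X)) => Λ' g)
        (Λ.comp (singleCLM q (by rw [← hqr_def]; exact hqr0) j))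
    -- product compactness
    letI τD : TopologicalSpace (StrongDual ℝ X) := wTopDual X
    letI τP : TopologicalSpace (ℕ → StrongDual ℝ X) := Pi.topologicalSpace
    have hP : IsCompact (Set.univ.pi C) := isCompact_univ_pi hCcomp
    -- the assembling map
    set F : (Set.univ.pi C).Elem → lp (fun _ : ℕ => StrongDual ℝ X) q :=
      fun f => ⟨f.1, hmem f.1 (fun j => f.2 j (Set.mem_univ j))⟩ with hF_def
    have hFim : {ψ : lp (fun _ : ℕ => StrongDual ℝ X) q | ‖ψ‖ = 1 ∧ ∑' j, ψ j (xs j) = 1} =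
        F '' Set.univ := by
      ext ψ
      constructor
      · intro hψ
        refine ⟨⟨⇑ψ, fun j _ => hCmem ψ hψ.1 hψ.2 j⟩, Set.mem_univ _, ?_⟩
        exact lp.ext rfl
      · rintro ⟨f, -, rfl⟩
        exact hB _ (fun j => f.2 j (Set.mem_univ j))
    have hFcont : @Continuous _ _ _ (wTop q) F := by
      refine pairing_cont_rng _ _ _ fun Λ => ?_
      -- uniform approximation by finitely supported truncations
      set G : ℕ → (Set.univ.pi C).Elem → ℝ :=
        fun N f => ∑ j ∈ Finset.range N, Λ (lp.single (E := fun _ : ℕ => StrongDual ℝ X) q j (f.1 j))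
        with hG_def
      have hGcont : ∀ N, Continuous (G N) := by
        intro N
        apply continuous_finset_sum
        intro j _
        have h1 : Continuous (fun f : (Set.univ.pi C).Elem => f.1 j) :=
          (continuous_apply j).comp continuous_subtype_val
        exact (hsingle_cont Λ j).comp h1
      have htail : ∀ (f : (Set.univ.pi C).Elem) (N : ℕ),
          dist (Λ (F f)) (G N f) ≤
            ‖Λ‖ * (1 - ∑ j ∈ Finset.range N, a j ^ pr) ^ (1 / qr) := by
        intro f N
        have hFf : ∀ j, (F f : ∀ _ : ℕ, StrongDual ℝ X) j = f.1 j := fun j => rfl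
        have hGN : G N f = Λ (∑ j ∈ Finset.range N,
            lp.single (E := fun _ : ℕ => StrongDual ℝ X) q j ((F f : ∀ _ : ℕ, StrongDual ℝ X) j)) := by
          rw [map_sum]
        have hnormF : ‖F f‖ ^ qr = 1 := by
          rw [lp.norm_rpow_eq_tsum (by rw [← hqr_def]; exact hqr0) (F f)]
          rw [show (fun j => ‖(F f : ∀ _ : ℕ, StrongDual ℝ X) j‖ ^ q.toReal) = fun j => a j ^ pr from
            funext (hCnorm f.1 (fun j => f.2 j (Set.mem_univ j)))]
          exact hsa.tsum_eq
        have hcompl := lp.norm_compl_sum_single (by rw [← hqr_def]; exact hqr0)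
          (F f) (Finset.range N)
        rw [hnormF] at hcompl
        have hsumc : ∑ j ∈ Finset.range N, ‖(F f : ∀ _ : ℕ, StrongDual ℝ X) j‖ ^ q.toReal =
            ∑ j ∈ Finset.range N, a j ^ pr := by
          apply Finset.sum_congr rfl
          intro j _
          exact hCnorm f.1 (fun k => f.2 k (Set.mem_univ k)) j
        rw [hsumc] at hcompl
        have hdiff : ‖F f - ∑ j ∈ Finset.range N,
            lp.single (E := fun _ : ℕ => StrongDual ℝ X) q j ((F f : ∀ _ : ℕ, StrongDual ℝ X) j)‖ =
            (1 - ∑ j ∈ Finset.range N, a j ^ pr) ^ (1 / qr) := by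
          have hnn : (0:ℝ) ≤ ‖F f - ∑ j ∈ Finset.range N,
              lp.single (E := fun _ : ℕ => StrongDual ℝ X) q j ((F f : ∀ _ : ℕ, StrongDual ℝ X) j)‖ :=
            norm_nonneg _
          rw [show ‖F f - ∑ j ∈ Finset.range N,
              lp.single (E := fun _ : ℕ => StrongDual ℝ X) q j ((F f : ∀ _ : ℕ, StrongDual ℝ X) j)‖ =
              (‖F f - ∑ j ∈ Finset.range N,
                lp.single (E := fun _ : ℕ => StrongDual ℝ X) q j ((F f : ∀ _ : ℕ, StrongDual ℝ X) j)‖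
                ^ qr) ^ (1/qr) by
            rw [← Real.rpow_mul hnn, mul_one_div, div_self hqr0.ne', Real.rpow_one], hcompl]
        rw [hGN, dist_eq_norm, ← map_sub]
        calc ‖Λ (F f - ∑ j ∈ Finset.range N,
              lp.single (E := fun _ : ℕ => StrongDual ℝ X) q j ((F f : ∀ _ : ℕ, StrongDual ℝ X) j))‖ ≤
            ‖Λ‖ * ‖F f - ∑ j ∈ Finset.range N,
              lp.single (E := fun _ : ℕ => StrongDual ℝ X) q j ((F f : ∀ _ : ℕ, StrongDual ℝ X) j)‖ :=
            Λ.le_opNorm _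
          _ = ‖Λ‖ * (1 - ∑ j ∈ Finset.range N, a j ^ pr) ^ (1 / qr) := by rw [hdiff]
      have hbound : Filter.Tendsto
          (fun N => ‖Λ‖ * (1 - ∑ j ∈ Finset.range N, a j ^ pr) ^ (1 / qr))
          Filter.atTop (nhds 0) := by
        have h1 : Filter.Tendsto (fun N => 1 - ∑ j ∈ Finset.range N, a j ^ pr)
            Filter.atTop (nhds 0) := by
          have := hsa.tendsto_sum_nat
          have h2 := Filter.Tendsto.const_sub (1:ℝ) this
          simpa using h2
        have h2 : Filter.Tendsto (fun N => (1 - ∑ j ∈ Finset.range N, a j ^ pr) ^ (1 / qr))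
            Filter.atTop (nhds 0) := by
          have hc : ContinuousAt (fun x : ℝ => x ^ (1 / qr)) 0 :=
            Real.continuousAt_rpow_const 0 (1 / qr) (Or.inr (by positivity))
          have := hc.tendsto.comp h1
          simpa [Function.comp_def, one_div,
            Real.zero_rpow (ne_of_gt (by positivity : (0:ℝ) < qr⁻¹))] using this
        have := h2.const_mul ‖Λ‖
        simpa using this
      have htu : TendstoUniformly G (fun f => Λ (F f)) Filter.atTop := by
        rw [Metric.tendstoUniformly_iff]
        intro ε hε
        have := Filter.Tendsto.eventually_lt_const hε hbound
        filter_upwards [this] with N hN f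
        calc dist (Λ (F f)) (G N f) ≤
            ‖Λ‖ * (1 - ∑ j ∈ Finset.range N, a j ^ pr) ^ (1 / qr) := htail f N
          _ < ε := hN
      exact htu.continuous (Filter.Frequently.of_forall hGcont)
    have hPuniv : IsCompact (Set.univ : Set (Set.univ.pi C).Elem) :=
      isCompact_iff_isCompact_univ.mp hP
    have := @IsCompact.image _ _ _ (wTop q) _ _ hPuniv hFcont
    rw [hFim]
    simpa using this
end

section
/- Let (Ω, Σ, μ) be a probability space, X a Banach space, f ∈ L^p(μ, X) with ‖f‖ = 1, and g ∈ S̃_f. Then g(ω)(f(ω)) = ‖g(ω)‖·‖f(ω)‖ for almost every ω; in particular, for a.e. ω with f(ω) ≠ 0 one has g(ω)/‖g(ω)‖ ∈ S_{f(ω)/‖f(ω)‖}, and g(ω) = 0 exactly when f(ω) = 0 (a.e.) in the case 1 < p < ∞. -/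
open MeasureTheory NormedSpace

/-- Equality case in Young's inequality. -/
lemma young_eq_aux {a b P Q : ℝ} (ha : 0 ≤ a) (hb : 0 ≤ b) (hpq : P.HolderConjugate Q)
    (h : a * b = a ^ P / P + b ^ Q / Q) : a ^ P = b ^ Q := by
  have hP := hpq.pos
  have hQ := hpq.symm.pos
  rcases ha.eq_or_lt with rfl | ha'
  · rw [Real.zero_rpow hpq.ne_zero, zero_mul, zero_div, zero_add] at h
    rw [Real.zero_rpow hpq.ne_zero]
    exact ((div_eq_zero_iff.mp h.symm).resolve_right hQ.ne').symm
  rcases hb.eq_or_lt with rfl | hb'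
  · rw [Real.zero_rpow hpq.symm.ne_zero, mul_zero, zero_div, add_zero] at h
    rw [Real.zero_rpow hpq.symm.ne_zero]
    exact (div_eq_zero_iff.mp h.symm).resolve_right hP.ne'
  by_contra hne
  have hx : a ^ P = Real.exp (P * Real.log a) := by
    rw [Real.rpow_def_of_pos ha', mul_comm]
  have hy : b ^ Q = Real.exp (Q * Real.log b) := by
    rw [Real.rpow_def_of_pos hb', mul_comm]
  have hxy : P * Real.log a ≠ Q * Real.log b := by
    intro hh
    exact hne (by rw [hx, hy, hh])
  have key := strictConvexOn_exp.2 (Set.mem_univ (P * Real.log a))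
    (Set.mem_univ (Q * Real.log b)) hxy (by positivity : (0:ℝ) < P⁻¹)
    (by positivity : (0:ℝ) < Q⁻¹)
    hpq.inv_add_inv_eq_one
  rw [smul_eq_mul, smul_eq_mul, smul_eq_mul, smul_eq_mul,
    inv_mul_cancel_left₀ hP.ne', inv_mul_cancel_left₀ hQ.ne',
    Real.exp_add, Real.exp_log ha', Real.exp_log hb', ← hx, ← hy,
    inv_mul_eq_div, inv_mul_eq_div] at key
  exact absurd h key.ne

lemma ae_zero_of_integral_nonpos {Ω : Type*} [MeasurableSpace Ω] {μ : Measure Ω} {h : Ω → ℝ}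
    (hnn : 0 ≤ᵐ[μ] h) (hint : Integrable h μ) (hle : ∫ ω, h ω ∂μ ≤ 0) : h =ᵐ[μ] 0 := by
  have h0 : ∫ ω, h ω ∂μ = 0 := le_antisymm hle (integral_nonneg_of_ae hnn)
  exact (integral_eq_zero_iff_of_nonneg_ae hnn hint).mp h0

lemma pair_eval_aux {X : Type*} [NormedAddCommGroup X] [NormedSpace ℝ X]
    {g : StrongDual ℝ X} {x : X} (hx : x ≠ 0) (hgne : g ≠ 0)
    (heq : g x = ‖g‖ * ‖x‖) :
    ‖(‖g‖⁻¹ • g : StrongDual ℝ X)‖ = 1 ∧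
    (‖g‖⁻¹ • g : StrongDual ℝ X) (‖x‖⁻¹ • x) = 1 := by
  have hg0 : ‖g‖ ≠ 0 := norm_ne_zero_iff.mpr hgne
  have hx0 : ‖x‖ ≠ 0 := norm_ne_zero_iff.mpr hx
  constructor
  · rw [norm_smul, norm_inv, norm_norm, inv_mul_cancel₀ hg0]
  · rw [ContinuousLinearMap.smul_apply, ContinuousLinearMap.map_smul, smul_eq_mul, smul_eq_mul,
      heq]
    field_simp

/-- Let `μ` be a probability measure, `X` a Banach space, `f ∈ L^p(μ, X)` with `‖f‖ = 1`,
and `g ∈ S̃_f` (i.e. `g ∈ L^q(μ, X*)`, `‖g‖_q ≤ 1`, `∫ g(ω)(f(ω)) dμ = 1`).  Then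
`g(ω)(f(ω)) = ‖g(ω)‖·‖f(ω)‖` a.e.; in particular for a.e. `ω` with `f(ω) ≠ 0` the
normalized functional `g(ω)/‖g(ω)‖` belongs to `S_{f(ω)/‖f(ω)‖}`, and when `1 < p < ∞`,
`g(ω) = 0` exactly when `f(ω) = 0` (a.e.). -/
theorem stmt12 {Ω : Type*} [MeasurableSpace Ω] (μ : Measure Ω) [IsProbabilityMeasure μ]
    {X : Type*} [NormedAddCommGroup X] [NormedSpace ℝ X] [CompleteSpace X]
    (p q : ENNReal) (hp : 1 ≤ p) (hp' : p ≠ ⊤) (hpq : 1 / p + 1 / q = 1)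
    (f : Ω → X) (hf : MemLp f p μ) (hf1 : eLpNorm f p μ = 1)
    (g : Ω → StrongDual ℝ X)
    (hg : MemLp g q μ) (hgn : eLpNorm g q μ ≤ 1)
    (hgi : Integrable (fun ω => g ω (f ω)) μ)
    (hg1 : ∫ ω, g ω (f ω) ∂μ = 1) :
    (∀ᵐ ω ∂μ, g ω (f ω) = ‖g ω‖ * ‖f ω‖) ∧
    (∀ᵐ ω ∂μ, f ω ≠ 0 →
      ‖(‖g ω‖⁻¹ • g ω : StrongDual ℝ X)‖ = 1 ∧
      (‖g ω‖⁻¹ • g ω : StrongDual ℝ X) (‖f ω‖⁻¹ • f ω) = 1) ∧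
    (1 < p → ∀ᵐ ω ∂μ, (g ω = 0 ↔ f ω = 0)) := by
  have hgf_le : ∀ ω, g ω (f ω) ≤ ‖g ω‖ * ‖f ω‖ := by
    intro ω
    have h := (g ω).le_opNorm (f ω)
    rw [Real.norm_eq_abs] at h
    exact (le_abs_self _).trans h
  have hmm_meas : AEStronglyMeasurable (fun ω => ‖g ω‖ * ‖f ω‖) μ :=
    hg.aestronglyMeasurable.norm.mul hf.aestronglyMeasurable.norm
  rcases eq_or_lt_of_le hp with hp1 | hp1
  · -- case p = 1
    subst hp1
    have hq : q = ⊤ := by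
      simp only [one_div, inv_one] at hpq
      have h0 : (1:ENNReal) + q⁻¹ = 1 + 0 := by simpa using hpq
      have := (ENNReal.add_right_inj ENNReal.one_ne_top).mp h0
      exact ENNReal.inv_eq_zero.mp this
    have hfi : Integrable f μ := memLp_one_iff_integrable.mp hf
    have hfn1 : ∫ ω, ‖f ω‖ ∂μ = 1 := by
      have h1 : ENNReal.ofReal (∫ ω, ‖f ω‖ ∂μ) = 1 := by
        rw [ofReal_integral_norm_eq_lintegral_enorm hfi,
          ← eLpNorm_one_eq_lintegral_enorm, hf1]
      have h2 := congrArg ENNReal.toReal h1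
      rwa [ENNReal.toReal_ofReal (integral_nonneg fun ω => norm_nonneg _),
        ENNReal.toReal_one] at h2
    have hgb : ∀ᵐ ω ∂μ, ‖g ω‖ ≤ 1 := by
      have h1 : eLpNormEssSup g μ ≤ 1 := by rwa [hq, eLpNorm_exponent_top] at hgn
      filter_upwards [ae_le_eLpNormEssSup (f := g) (μ := μ)] with ω hω
      have h2 : (‖g ω‖₊ : ENNReal) ≤ 1 := hω.trans h1
      rw [← ENNReal.coe_one, ENNReal.coe_le_coe] at h2
      exact h2
    have hmul_int : Integrable (fun ω => ‖g ω‖ * ‖f ω‖) μ := by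
      refine Integrable.mono' hfi.norm hmm_meas ?_
      filter_upwards [hgb] with ω h
      rw [Real.norm_eq_abs, abs_of_nonneg (by positivity)]
      exact mul_le_of_le_one_left (norm_nonneg _) h
    have hI1 : 1 ≤ ∫ ω, ‖g ω‖ * ‖f ω‖ ∂μ := by
      rw [← hg1]; exact integral_mono hgi hmul_int hgf_le
    have hI2 : ∫ ω, ‖g ω‖ * ‖f ω‖ ∂μ ≤ 1 := by
      rw [← hfn1]
      refine integral_mono_ae hmul_int hfi.norm ?_
      filter_upwards [hgb] with ω h
      exact mul_le_of_le_one_left (norm_nonneg _) h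
    have hz1 : (fun ω => ‖g ω‖ * ‖f ω‖ - g ω (f ω)) =ᵐ[μ] 0 := by
      refine ae_zero_of_integral_nonpos (ae_of_all _ fun ω => sub_nonneg.mpr (hgf_le ω))
        (hmul_int.sub hgi) ?_
      rw [integral_sub hmul_int hgi, hg1]
      linarith
    have hz2 : (fun ω => ‖f ω‖ - ‖g ω‖ * ‖f ω‖) =ᵐ[μ] 0 := by
      refine ae_zero_of_integral_nonpos ?_ (hfi.norm.sub hmul_int) ?_
      · filter_upwards [hgb] with ω h
        simp only [Pi.zero_apply]
        nlinarith [norm_nonneg (f ω), norm_nonneg (g ω)]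
      · rw [integral_sub hfi.norm hmul_int, hfn1]
        linarith
    have hA : ∀ᵐ ω ∂μ, g ω (f ω) = ‖g ω‖ * ‖f ω‖ := by
      filter_upwards [hz1] with ω h
      simp only [Pi.zero_apply] at h
      linarith
    refine ⟨hA, ?_, ?_⟩
    · filter_upwards [hA, hz2] with ω h1 h2 hf0
      simp only [Pi.zero_apply] at h2
      have hfn0 : ‖f ω‖ ≠ 0 := norm_ne_zero_iff.mpr hf0
      have hgone : ‖g ω‖ = 1 := by
        have : (‖g ω‖ - 1) * ‖f ω‖ = 0 := by ring_nf; linarith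
        rcases mul_eq_zero.mp this with h | h
        · linarith
        · exact absurd h hfn0
      have hgne : g ω ≠ 0 := by
        intro hh; rw [hh] at hgone; simp at hgone
      exact pair_eval_aux hf0 hgne h1
    · intro hlt
      exact absurd hlt (lt_irrefl _)
  · -- case 1 < p
    have hconj : p.HolderConjugate q := ⟨by simpa [one_div] using hpq⟩
    have hp0 : p ≠ 0 := (zero_lt_one.trans hp1).ne'
    have hq0 : q ≠ 0 := by rintro rfl; simp at hpq
    have hq_top : q ≠ ⊤ := by
      intro h
      rw [h] at hpq
      simp only [one_div, ENNReal.inv_top, add_zero] at hpq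
      exact hp1.ne' (ENNReal.inv_eq_one.mp hpq)
    set P := p.toReal with hPdef
    set Q := q.toReal with hQdef
    have hP1 : 1 < P := by
      rw [hPdef, ← ENNReal.toReal_one]
      exact (ENNReal.toReal_lt_toReal ENNReal.one_ne_top hp').mpr hp1
    have hsum : P⁻¹ + Q⁻¹ = 1 := by
      have h := congrArg ENNReal.toReal hpq
      rwa [one_div, one_div, ENNReal.toReal_add (ENNReal.inv_ne_top.mpr hp0)
        (ENNReal.inv_ne_top.mpr hq0), ENNReal.toReal_inv, ENNReal.toReal_inv,
        ENNReal.toReal_one] at h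
    have hPQ : P.HolderConjugate Q := Real.holderConjugate_iff.mpr ⟨hP1, hsum⟩
    have hPpos : 0 < P := hPQ.pos
    have hQpos : 0 < Q := hPQ.symm.pos
    have hfP_int : Integrable (fun ω => ‖f ω‖ ^ P) μ := hf.integrable_norm_rpow hp0 hp'
    have hgQ_int : Integrable (fun ω => ‖g ω‖ ^ Q) μ := hg.integrable_norm_rpow hq0 hq_top
    have hfP : ∫ ω, ‖f ω‖ ^ P ∂μ = 1 := by
      have h := hf.eLpNorm_eq_integral_rpow_norm hp0 hp'
      rw [hf1] at h
      have h2 := congrArg ENNReal.toReal h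
      rw [ENNReal.toReal_one, ENNReal.toReal_ofReal
        (Real.rpow_nonneg (integral_nonneg fun ω => Real.rpow_nonneg (norm_nonneg _) _) _)] at h2
      have h3 := congrArg (fun x : ℝ => x ^ P) h2
      rw [Real.one_rpow, Real.rpow_inv_rpow
        (integral_nonneg fun ω => Real.rpow_nonneg (norm_nonneg _) _) hPpos.ne'] at h3
      exact h3.symm
    have hgQ : ∫ ω, ‖g ω‖ ^ Q ∂μ ≤ 1 := by
      have h := hg.eLpNorm_eq_integral_rpow_norm hq0 hq_top
      rw [h] at hgn
      have h2 : (∫ ω, ‖g ω‖ ^ Q ∂μ) ^ Q⁻¹ ≤ 1 := ENNReal.ofReal_le_one.mp hgn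
      have h3 := Real.rpow_le_rpow (Real.rpow_nonneg
        (integral_nonneg fun ω => Real.rpow_nonneg (norm_nonneg _) _) _) h2 hQpos.le
      rwa [Real.one_rpow, Real.rpow_inv_rpow
        (integral_nonneg fun ω => Real.rpow_nonneg (norm_nonneg _) _) hQpos.ne'] at h3
    have ybound : ∀ ω, ‖g ω‖ * ‖f ω‖ ≤ ‖g ω‖ ^ Q / Q + ‖f ω‖ ^ P / P := fun ω =>
      Real.young_inequality_of_nonneg (norm_nonneg _) (norm_nonneg _) hPQ.symm
    have hsum_int : Integrable (fun ω => ‖g ω‖ ^ Q / Q + ‖f ω‖ ^ P / P) μ :=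
      (hgQ_int.div_const Q).add (hfP_int.div_const P)
    have hmul_int : Integrable (fun ω => ‖g ω‖ * ‖f ω‖) μ := by
      refine Integrable.mono' hsum_int hmm_meas (ae_of_all _ fun ω => ?_)
      rw [Real.norm_eq_abs, abs_of_nonneg (by positivity)]
      exact ybound ω
    have hI1 : 1 ≤ ∫ ω, ‖g ω‖ * ‖f ω‖ ∂μ := by
      rw [← hg1]; exact integral_mono hgi hmul_int hgf_le
    have hIsum : ∫ ω, (‖g ω‖ ^ Q / Q + ‖f ω‖ ^ P / P) ∂μ ≤ 1 := by
      rw [integral_add (hgQ_int.div_const Q) (hfP_int.div_const P),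
        integral_div, integral_div, hfP]
      have h1 : (∫ ω, ‖g ω‖ ^ Q ∂μ) / Q ≤ 1 / Q := (div_le_div_iff_of_pos_right hQpos).mpr hgQ
      have h2 : 1 / Q + 1 / P = 1 := by rw [one_div, one_div]; linarith
      linarith
    have hImul_le : ∫ ω, ‖g ω‖ * ‖f ω‖ ∂μ ≤ 1 :=
      (integral_mono hmul_int hsum_int ybound).trans hIsum
    have hz1 : (fun ω => ‖g ω‖ * ‖f ω‖ - g ω (f ω)) =ᵐ[μ] 0 := by
      refine ae_zero_of_integral_nonpos (ae_of_all _ fun ω => sub_nonneg.mpr (hgf_le ω))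
        (hmul_int.sub hgi) ?_
      rw [integral_sub hmul_int hgi, hg1]; linarith
    have hz2 : (fun ω => ‖g ω‖ ^ Q / Q + ‖f ω‖ ^ P / P - ‖g ω‖ * ‖f ω‖) =ᵐ[μ] 0 := by
      refine ae_zero_of_integral_nonpos (ae_of_all _ fun ω => sub_nonneg.mpr (ybound ω))
        (hsum_int.sub hmul_int) ?_
      rw [integral_sub hsum_int hmul_int]; linarith
    have hEq : ∀ᵐ ω ∂μ, ‖g ω‖ ^ Q = ‖f ω‖ ^ P := by
      filter_upwards [hz2] with ω h
      simp only [Pi.zero_apply] at h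
      exact young_eq_aux (norm_nonneg _) (norm_nonneg _) hPQ.symm (by linarith)
    have hA : ∀ᵐ ω ∂μ, g ω (f ω) = ‖g ω‖ * ‖f ω‖ := by
      filter_upwards [hz1] with ω h
      simp only [Pi.zero_apply] at h; linarith
    refine ⟨hA, ?_, ?_⟩
    · filter_upwards [hA, hEq] with ω h1 h2 hf0
      have hfn0 : 0 < ‖f ω‖ := norm_pos_iff.mpr hf0
      have hpos : 0 < ‖g ω‖ ^ Q := by
        rw [h2]; exact Real.rpow_pos_of_pos hfn0 _
      have hgne : g ω ≠ 0 := by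
        intro hh
        rw [hh] at hpos
        simp [Real.zero_rpow hQpos.ne'] at hpos
      exact pair_eval_aux hf0 hgne h1
    · intro _
      filter_upwards [hEq] with ω h
      constructor
      · intro hh
        rw [hh] at h
        simp only [norm_zero, Real.zero_rpow hQpos.ne'] at h
        exact norm_eq_zero.mp ((Real.rpow_eq_zero (norm_nonneg _) hPpos.ne').mp h.symm)
      · intro hh
        rw [hh] at h
        simp only [norm_zero, Real.zero_rpow hPpos.ne'] at h
        exact norm_eq_zero.mp ((Real.rpow_eq_zero (norm_nonneg _) hQpos.ne').mp h)
end
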